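/- The linear map on E^3_{9,5} defined by the diagonal matrix diag(1,1,2,3,4,5,6,7,5) with respect to the basis {X_0,...,X_8} (i.e. f(X_0)=X_0, f(X_1)=X_1, f(X_i)=iX_i for i=2,...,7, f(X_8)=5X_8) is a derivation. -/
import Mathlib
set_option maxHeartbeats 1000000


open Finset

/-- The `k`-th standard basis vector of `ℂⁿ` (zero if `k ≥ n`). -/
noncomputable def E (n k : ℕ) : Fin n → ℂ := fun t => if (t : ℕ) = k then 1 else 0

/-- The bilinear bracket on `ℂⁿ` determined by structure constants `s`, antisymmetrized:
`[e_i, e_j] = s i j - s j i`. -/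
noncomputable def brkt (n : ℕ) (s : ℕ → ℕ → Fin n → ℂ) (x y : Fin n → ℂ) : Fin n → ℂ :=
  ∑ i : Fin n, ∑ j : Fin n, (x i * y j) • (s (i : ℕ) (j : ℕ) - s (j : ℕ) (i : ℕ))

/-- Structure constants common to `E¹_{9,5}`, `E²_{9,5}`, `E³_{9,5}`, with parameters
`p, q, r, s` giving the coefficients of `X₇` in `[X₁,X₆]`, `[X₂,X₅]`, `[X₂,X₈]`, `[X₃,X₄]`:
`E¹ = sE95 3 (-1) (-3) 0`, `E² = sE95 1 1 (-1) (-2)`, `E³ = sE95 0 2 0 (-3)`. -/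
noncomputable def sE95 (p q r s : ℂ) : ℕ → ℕ → Fin 9 → ℂ := fun i j =>
  (if i = 0 ∧ 1 ≤ j ∧ j ≤ 6 then E 9 (j + 1) else 0) +
  (if i = 0 ∧ j = 8 then E 9 6 else 0) +
  (if i = 1 ∧ j = 4 then E 9 8 else 0) +
  (if i = 1 ∧ j = 5 then (2 : ℂ) • E 9 6 else 0) +
  (if i = 2 ∧ j = 3 then -E 9 8 else 0) +
  (if i = 2 ∧ j = 4 then -E 9 6 else 0) +
  (if i = 1 ∧ j = 6 then p • E 9 7 else 0) +
  (if i = 2 ∧ j = 5 then q • E 9 7 else 0) +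
  (if i = 2 ∧ j = 8 then r • E 9 7 else 0) +
  (if i = 3 ∧ j = 4 then s • E 9 7 else 0)

/-- The diagonal map `diag(1,1,2,3,4,5,6,7,5)` on `E³_{9,5}`. -/
noncomputable def dE95 (x : Fin 9 → ℂ) : Fin 9 → ℂ := fun t =>
  (if (t : ℕ) = 0 then 1 else if (t : ℕ) = 8 then 5 else ((t : ℕ) : ℂ)) * x t


lemma sum_univ_nine' {M : Type*} [AddCommMonoid M] (f : Fin 9 → M) :
    ∑ i, f i = f 0 + f 1 + f 2 + f 3 + f 4 + f 5 + f 6 + f 7 + f 8 := by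
  rw [Fin.sum_univ_castSucc, Fin.sum_univ_eight]; rfl

lemma brkt_eq (x y : Fin 9 → ℂ) :
    brkt 9 (sE95 0 2 0 (-3)) x y =
      (x 0 * y 1 - x 1 * y 0) • E 9 2 + (x 0 * y 2 - x 2 * y 0) • E 9 3 +
      (x 0 * y 3 - x 3 * y 0) • E 9 4 + (x 0 * y 4 - x 4 * y 0) • E 9 5 +
      (x 0 * y 5 - x 5 * y 0 + 2 * (x 1 * y 5 - x 5 * y 1)
        - (x 2 * y 4 - x 4 * y 2) + (x 0 * y 8 - x 8 * y 0)) • E 9 6 +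
      (x 0 * y 6 - x 6 * y 0 + 2 * (x 2 * y 5 - x 5 * y 2)
        - 3 * (x 3 * y 4 - x 4 * y 3)) • E 9 7 +
      (x 1 * y 4 - x 4 * y 1 - (x 2 * y 3 - x 3 * y 2)) • E 9 8 := by
  simp only [brkt, sum_univ_nine', sE95, Fin.isValue, Fin.val_zero, Fin.val_one, Fin.val_two,
    show ((3:Fin 9):ℕ)=3 from rfl, show ((4:Fin 9):ℕ)=4 from rfl,
    show ((5:Fin 9):ℕ)=5 from rfl, show ((6:Fin 9):ℕ)=6 from rfl,
    show ((7:Fin 9):ℕ)=7 from rfl, show ((8:Fin 9):ℕ)=8 from rfl]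
  norm_num
  module

/-- `diag(1,1,2,3,4,5,6,7,5)` is a derivation of `E³_{9,5}`. -/
theorem stmt_14 :
    ∀ x y : Fin 9 → ℂ,
      dE95 (brkt 9 (sE95 0 2 0 (-3)) x y)
        = brkt 9 (sE95 0 2 0 (-3)) (dE95 x) y + brkt 9 (sE95 0 2 0 (-3)) x (dE95 y) := by
  intro x y
  funext t
  simp only [brkt_eq, dE95, Pi.add_apply, Pi.smul_apply, smul_eq_mul, E]
  fin_cases t <;>
    norm_num [show ((3:Fin 9):ℕ)=3 from rfl, show ((4:Fin 9):ℕ)=4 from rfl,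
      show ((5:Fin 9):ℕ)=5 from rfl, show ((6:Fin 9):ℕ)=6 from rfl,
      show ((7:Fin 9):ℕ)=7 from rfl, show ((8:Fin 9):ℕ)=8 from rfl] <;> ring
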